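/- A contiguous segment of a Morton curve through a uniform or adaptive tree of maximum refinement level L produces at most two distinct face-connected subdomains, independently of the space dimension d. Precisely: fix d ≥ 1 and L ≥ 0, let T be an adaptive tree of maximum level L, and let S ⊆ T be a contiguous segment of the Morton curve through T. Then the set S has at most two face-connected components. -/

import Mathlib

/-- The `r`-th coordinate (1 ≤ r ≤ d) of a level-`L` quadrant `Q` in dimension `d`. -/
def mortonCoord (d L r Q : ℕ) : ℕ :=
  ∑ ℓ ∈ Finset.range L, (Q / 2 ^ (ℓ * d + (r - 1)) % 2) * 2 ^ ℓ

/-- Two level-`L` quadrants are face-neighbors: they differ by exactly one in exactly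
one coordinate and agree in all other coordinates. -/
def MortonFaceNbr (d L Q Q' : ℕ) : Prop :=
  Q ≠ Q' ∧ ∃ r, 1 ≤ r ∧ r ≤ d ∧
    ((mortonCoord d L r Q : ℤ) - (mortonCoord d L r Q' : ℤ)).natAbs = 1 ∧
    ∀ s, 1 ≤ s → s ≤ d → s ≠ r → mortonCoord d L s Q = mortonCoord d L s Q'

/-- A set of level-`L` quadrants is face-connected: the graph on `S` whose edges join
face-neighbors is connected. -/
def MortonFaceConnected (d L : ℕ) (S : Set ℕ) : Prop :=
  ∀ Q ∈ S, ∀ Q' ∈ S,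
    Relation.ReflTransGen (fun a b => a ∈ S ∧ b ∈ S ∧ MortonFaceNbr d L a b) Q Q'

/-- `S` has at most `n` face-connected components: it can be written as a union of `n`
face-connected subsets. -/
def MortonCompBound (d L : ℕ) (S : Set ℕ) (n : ℕ) : Prop :=
  ∃ f : Fin n → Set ℕ, S = ⋃ i, f i ∧ ∀ i, MortonFaceConnected d L (f i)

/-- A quadrant of level `p.1 ≤ L` (encoded as the pair `p = (level, index)`) has the
level-`L` quadrant `x` among its level-`L` descendants. -/
def mortonDescends (d L : ℕ) (p : ℕ × ℕ) (x : ℕ) : Prop :=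
  p.2 * 2 ^ (d * (L - p.1)) ≤ x ∧ x < (p.2 + 1) * 2 ^ (d * (L - p.1))

/-- `T` is an adaptive tree of maximum level `L`: a finite set of quadrants of levels
`≤ L` whose sets of level-`L` descendants partition `[0, 2^{dL})`. -/
def MortonAdaptiveTree (d L : ℕ) (T : Finset (ℕ × ℕ)) : Prop :=
  (∀ p ∈ T, p.1 ≤ L ∧ p.2 < 2 ^ (d * p.1)) ∧
  ∀ x, x < 2 ^ (d * L) → ∃! p, p ∈ T ∧ mortonDescends d L p x

/-- Two tree quadrants are face-neighbors if some level-`L` descendant of one is a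
face-neighbor of some level-`L` descendant of the other. -/
def MortonTreeNbr (d L : ℕ) (p q : ℕ × ℕ) : Prop :=
  ∃ x y, mortonDescends d L p x ∧ mortonDescends d L q y ∧ MortonFaceNbr d L x y

/-- A set `S` of tree quadrants is face-connected. -/
def MortonTreeConnected (d L : ℕ) (S : Set (ℕ × ℕ)) : Prop :=
  ∀ p ∈ S, ∀ q ∈ S,
    Relation.ReflTransGen (fun a b => a ∈ S ∧ b ∈ S ∧ MortonTreeNbr d L a b) p q

namespace MortonAux

lemma geo (n : ℕ) : (∑ i ∈ Finset.range n, 2^i) = 2^n - 1 := by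
  induction n with
  | zero => simp
  | succ k ih =>
    rw [Finset.sum_range_succ, ih]
    have : 1 ≤ 2^k := Nat.one_le_two_pow
    rw [pow_succ]; omega

lemma sum_if_lt {n L : ℕ} (h : n ≤ L) :
    (∑ ℓ ∈ Finset.range L, if ℓ < n then 2^ℓ else 0) = 2^n - 1 := by
  have h1 : (∑ ℓ ∈ Finset.Ico 0 n, if ℓ < n then 2^ℓ else (0:ℕ))
      + ∑ ℓ ∈ Finset.Ico n L, (if ℓ < n then 2^ℓ else 0)
      = ∑ ℓ ∈ Finset.Ico 0 L, if ℓ < n then 2^ℓ else 0 :=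
    Finset.sum_Ico_consecutive _ (Nat.zero_le n) h
  have h2 : (∑ ℓ ∈ Finset.Ico n L, if ℓ < n then 2^ℓ else (0:ℕ)) = 0 :=
    Finset.sum_eq_zero (fun x hx => by rw [Finset.mem_Ico] at hx; rw [if_neg (by omega)])
  have h3 : (∑ ℓ ∈ Finset.Ico 0 n, if ℓ < n then 2^ℓ else (0:ℕ))
      = ∑ ℓ ∈ Finset.Ico 0 n, 2^ℓ :=
    Finset.sum_congr rfl (fun x hx => by rw [Finset.mem_Ico] at hx; rw [if_pos (by omega)])
  rw [Finset.range_eq_Ico, ← h1, h2, h3, ← Finset.range_eq_Ico, geo]; omega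

lemma bit_dvd {t m p : ℕ} (hm : 2^t ∣ m) (hp : p < t) : m / 2^p % 2 = 0 := by
  obtain ⟨k, rfl⟩ := hm
  have : (2:ℕ)^t = 2^p * 2^(t-p) := by rw [← pow_add]; congr 1; omega
  rw [this, mul_assoc, Nat.mul_div_cancel_left _ (Nat.two_pow_pos p)]
  have h2 : 2 ∣ 2^(t-p) * k := Dvd.dvd.mul_right (dvd_pow_self 2 (by omega)) k
  omega

lemma bit_lt {e p : ℕ} (he : e < 2^p) : e / 2^p % 2 = 0 := by
  rw [Nat.div_eq_of_lt he]

lemma bit_split {t m e : ℕ} (hm : 2^t ∣ m) (he : e < 2^t) (p : ℕ) :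
    (m + e) / 2^p % 2 = if p < t then e / 2^p % 2 else m / 2^p % 2 := by
  obtain ⟨k, rfl⟩ := hm
  by_cases hp : p < t
  · rw [if_pos hp]
    have h1 : (2:ℕ)^t = 2^p * 2^(t-p) := by rw [← pow_add]; congr 1; omega
    rw [h1, mul_assoc, Nat.add_comm,
      Nat.add_mul_div_left _ _ (Nat.two_pow_pos p)]
    have h2 : 2 ∣ 2^(t-p) * k := Dvd.dvd.mul_right (dvd_pow_self 2 (by omega)) k
    omega
  · rw [if_neg hp]
    push_neg at hp
    have h1 : (2:ℕ)^p = 2^t * 2^(p-t) := by rw [← pow_add]; congr 1; omega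
    have hpos : 0 < (2:ℕ)^t := Nat.two_pow_pos t
    rw [h1, ← Nat.div_div_eq_div_mul, ← Nat.div_div_eq_div_mul,
      Nat.mul_add_div hpos, Nat.div_eq_of_lt he, Nat.mul_div_cancel_left _ hpos, Nat.add_zero]

lemma coord_add {d L r t m e : ℕ} (hm : 2^t ∣ m) (he : e < 2^t) :
    mortonCoord d L r (m + e) = mortonCoord d L r m + mortonCoord d L r e := by
  unfold mortonCoord
  rw [← Finset.sum_add_distrib]
  refine Finset.sum_congr rfl (fun ℓ _ => ?_)
  rw [← Nat.add_mul]
  congr 1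
  rw [bit_split hm he]
  by_cases hp : ℓ * d + (r-1) < t
  · rw [if_pos hp, bit_dvd hm hp]; omega
  · push_neg at hp
    rw [if_neg (by omega)]
    have : e < 2 ^ (ℓ * d + (r-1)) := lt_of_lt_of_le he (Nat.pow_le_pow_right (by norm_num) hp)
    rw [bit_lt this]; omega

/-- sum of selected powers of two below `t` -/
def maskSum (t : ℕ) (g : ℕ → Prop) [DecidablePred g] : ℕ :=
  ∑ p ∈ Finset.range t, if g p then 2^p else 0

lemma maskSum_lt (t : ℕ) (g : ℕ → Prop) [DecidablePred g] : maskSum t g < 2^t := by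
  induction t with
  | zero => simp [maskSum]
  | succ k ih =>
    rw [maskSum, Finset.sum_range_succ, ← maskSum]
    have h1 : (if g k then 2^k else 0) ≤ 2^k := by split <;> omega
    have : 1 ≤ 2^k := Nat.one_le_two_pow
    rw [pow_succ]; omega

lemma maskSum_bit (t : ℕ) (g : ℕ → Prop) [DecidablePred g] (p : ℕ) :
    maskSum t g / 2^p % 2 = if p < t ∧ g p then 1 else 0 := by
  induction t with
  | zero => rw [maskSum]; simp
  | succ k ih =>
    have hms : maskSum (k+1) g = (if g k then 2^k else 0) + maskSum k g := by
      rw [maskSum, Finset.sum_range_succ, ← maskSum, Nat.add_comm]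
    have hdvd : 2^k ∣ (if g k then 2^k else 0) := by split <;> simp
    rw [hms, bit_split hdvd (maskSum_lt k g) p]
    by_cases hp : p < k
    · rw [if_pos hp, ih]
      by_cases hg : g p
      · rw [if_pos ⟨hp, hg⟩, if_pos ⟨by omega, hg⟩]
      · rw [if_neg (by tauto), if_neg (by tauto)]
    · rw [if_neg hp]
      push_neg at hp
      by_cases hpk : p = k
      · subst hpk
        by_cases hg : g p
        · rw [if_pos hg, if_pos ⟨by omega, hg⟩, Nat.div_self (Nat.two_pow_pos p)]
      
        · rw [if_neg hg, if_neg (by tauto), Nat.zero_div, Nat.zero_mod]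
      · have hpk' : k < p := by omega
        have hlt : (if g k then 2^k else 0) < 2^p := by
          have : (2:ℕ)^k < 2^p := Nat.pow_lt_pow_right (by norm_num) hpk'
          split <;> omega
        rw [bit_lt hlt, if_neg (by omega)]

/-- position comparison -/
lemma pos_lt_iff {d : ℕ} (hd : 1 ≤ d) {ℓ ℓ' r c : ℕ} (hr : 1 ≤ r) (hrd : r ≤ d)
    (hc : 1 ≤ c) (hcd : c ≤ d) :
    (ℓ * d + (r-1) < ℓ' * d + (c-1)) ↔ (ℓ < ℓ' ∨ (ℓ = ℓ' ∧ r < c)) := by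
  constructor
  · intro h
    rcases lt_trichotomy ℓ ℓ' with h1 | h1 | h1
    · exact Or.inl h1
    · subst h1; right; exact ⟨rfl, by omega⟩
    · exfalso
      have h2 : (ℓ'+1) * d ≤ ℓ * d := Nat.mul_le_mul_right d (by omega)
      have h3 : ℓ' * d + d = (ℓ'+1) * d := by ring
      omega
  · intro h
    rcases h with h1 | ⟨h1, h2⟩
    · have h2 : (ℓ+1) * d ≤ ℓ' * d := Nat.mul_le_mul_right d (by omega)
      have h3 : ℓ * d + d = (ℓ+1) * d := by ring
      omega
    · subst h1; omega

lemma pos_eq_iff {d : ℕ} (hd : 1 ≤ d) {ℓ ℓ' r c : ℕ} (hr : 1 ≤ r) (hrd : r ≤ d)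
    (hc : 1 ≤ c) (hcd : c ≤ d) :
    (ℓ * d + (r-1) = ℓ' * d + (c-1)) ↔ (ℓ = ℓ' ∧ r = c) := by
  constructor
  · intro h
    have h1 := (pos_lt_iff hd hr hrd hc hcd (ℓ := ℓ) (ℓ' := ℓ')).not
    have h2 := (pos_lt_iff hd hc hcd hr hrd (ℓ := ℓ') (ℓ' := ℓ)).not
    constructor
    · omega
    · omega
  · rintro ⟨rfl, rfl⟩; rfl

lemma pos_mod {d ℓ r : ℕ} (hr : 1 ≤ r) (hrd : r ≤ d) : (ℓ * d + (r-1)) % d = r - 1 := by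
  rw [Nat.add_comm, Nat.add_mul_mod_self_right, Nat.mod_eq_of_lt (by omega)]

lemma coord_mask {d L t : ℕ} (g : ℕ → Prop) [DecidablePred g] (r : ℕ) :
    mortonCoord d L r (maskSum t g)
      = ∑ ℓ ∈ Finset.range L, if (ℓ*d+(r-1) < t ∧ g (ℓ*d+(r-1))) then 2^ℓ else 0 := by
  unfold mortonCoord
  refine Finset.sum_congr rfl (fun ℓ _ => ?_)
  rw [maskSum_bit]
  split <;> simp

lemma bit_pow {q p : ℕ} : 2^q / 2^p % 2 = if p = q then 1 else 0 := by
  rcases lt_trichotomy p q with h | h | h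
  · rw [bit_dvd dvd_rfl h, if_neg (by omega)]
  · subst h; rw [Nat.div_self (Nat.two_pow_pos p), if_pos rfl]
  · rw [bit_lt (Nat.pow_lt_pow_right (by norm_num) h), if_neg (by omega)]

section Coords

variable {d L ℓ' r c : ℕ} (hd : 1 ≤ d) (hr : 1 ≤ r) (hrd : r ≤ d) (hc : 1 ≤ c)
  (hcd : c ≤ d) (hL : ℓ' < L)

include hd hr hrd hc hcd hL

lemma coord_E :
    mortonCoord d L r (maskSum (ℓ'*d+(c-1)) (fun p => p % d = c - 1))
      = if r = c then 2^ℓ' - 1 else 0 := by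
  rw [coord_mask]
  by_cases hrc : r = c
  · subst hrc
    rw [if_pos rfl, ← sum_if_lt (le_of_lt hL)]
    refine Finset.sum_congr rfl (fun ℓ _ => ?_)
    congr 1
    rw [pos_mod hr hrd, pos_lt_iff hd hr hrd hr hrd]
    simp only [eq_self_iff_true, and_true]
    rw [eq_iff_iff]
    constructor
    · rintro (h | ⟨h, h2⟩)
      · exact h
      · omega
    · exact Or.inl
  · rw [if_neg hrc]
    refine Finset.sum_eq_zero (fun ℓ _ => ?_)
    rw [if_neg]
    rintro ⟨-, h⟩
    rw [pos_mod hr hrd] at h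
    omega

lemma coord_F :
    mortonCoord d L r (maskSum (ℓ'*d+(c-1)) (fun p => ¬(p % d = c - 1)))
      = if r = c then 0 else if r < c then 2^(ℓ'+1) - 1 else 2^ℓ' - 1 := by
  rw [coord_mask]
  by_cases hrc : r = c
  · subst hrc
    rw [if_pos rfl]
    refine Finset.sum_eq_zero (fun ℓ _ => ?_)
    rw [if_neg]
    rintro ⟨-, h⟩
    exact h (pos_mod hr hrd)
  · rw [if_neg hrc]
    by_cases hlt : r < c
    · rw [if_pos hlt, ← sum_if_lt (show ℓ'+1 ≤ L by omega)]
      refine Finset.sum_congr rfl (fun ℓ _ => ?_)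
      congr 1
      rw [pos_mod hr hrd, pos_lt_iff hd hr hrd hc hcd, eq_iff_iff]
      constructor
      · rintro ⟨h | ⟨h, -⟩, -⟩ <;> omega
      · intro h
        refine ⟨?_, by omega⟩
        omega
    · rw [if_neg hlt, ← sum_if_lt (le_of_lt hL)]
      refine Finset.sum_congr rfl (fun ℓ _ => ?_)
      congr 1
      rw [pos_mod hr hrd, pos_lt_iff hd hr hrd hc hcd, eq_iff_iff]
      constructor
      · rintro ⟨h | ⟨h, h2⟩, -⟩ <;> omega
      · intro h
        refine ⟨Or.inl h, by omega⟩
    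
lemma coord_ones :
    mortonCoord d L r (2^(ℓ'*d+(c-1)) - 1)
      = if r < c then 2^(ℓ'+1) - 1 else 2^ℓ' - 1 := by
  have hm : (2:ℕ)^(ℓ'*d+(c-1)) - 1 = maskSum (ℓ'*d+(c-1)) (fun _ => True) := by
    rw [maskSum]
    simp only [if_pos trivial]
    rw [geo]
  rw [hm, coord_mask]
  by_cases hlt : r < c
  · rw [if_pos hlt, ← sum_if_lt (show ℓ'+1 ≤ L by omega)]
    refine Finset.sum_congr rfl (fun ℓ _ => ?_)
    congr 1
    rw [pos_lt_iff hd hr hrd hc hcd, eq_iff_iff]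
    constructor
    · rintro ⟨h | ⟨h, -⟩, -⟩ <;> omega
    · intro h
      constructor
      · omega
      · trivial
  · rw [if_neg hlt, ← sum_if_lt (le_of_lt hL)]
    refine Finset.sum_congr rfl (fun ℓ _ => ?_)
    congr 1
    rw [pos_lt_iff hd hr hrd hc hcd, eq_iff_iff]
    constructor
    · rintro ⟨h | ⟨h, h2⟩, -⟩ <;> omega
    · intro h
      exact ⟨Or.inl h, trivial⟩

lemma coord_pow :
    mortonCoord d L r (2^(ℓ'*d+(c-1))) = if r = c then 2^ℓ' else 0 := by
  unfold mortonCoord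
  have h1 : ∀ ℓ, (2:ℕ)^(ℓ'*d+(c-1)) / 2 ^ (ℓ * d + (r - 1)) % 2 * 2^ℓ
      = if (ℓ = ℓ' ∧ r = c) then 2^ℓ else 0 := by
    intro ℓ
    rw [bit_pow]
    have := pos_eq_iff hd hr hrd hc hcd (ℓ := ℓ) (ℓ' := ℓ')
    split
    · rw [if_pos (this.mp (by assumption)), Nat.one_mul]
    · rw [if_neg (fun h => by
        have := this.mpr h
        tauto), Nat.zero_mul]
  rw [Finset.sum_congr rfl (fun ℓ _ => h1 ℓ)]
  by_cases hrc : r = c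
  · subst hrc
    rw [if_pos rfl]
    rw [show (∑ ℓ ∈ Finset.range L, if (ℓ = ℓ' ∧ r = r) then 2^ℓ else 0)
        = ∑ ℓ ∈ Finset.range L, if ℓ = ℓ' then 2^ℓ else 0 from
      Finset.sum_congr rfl (fun ℓ _ => by simp)]
    rw [Finset.sum_ite_eq' (Finset.range L) ℓ' (fun ℓ => 2^ℓ)]
    rw [if_pos (Finset.mem_range.mpr hL)]
  · rw [if_neg hrc]
    exact Finset.sum_eq_zero (fun ℓ _ => by rw [if_neg (by tauto)])

end Coords

lemma FN1 {d L t m : ℕ} (hd : 1 ≤ d) (ht : t < d*L) (hm : 2^(t+1) ∣ m) :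
    MortonFaceNbr d L (m + 2^t) (m + maskSum t (fun p => p % d = (t % d + 1) - 1)) := by
  set c := t % d + 1 with hcdef
  set ℓ' := t / d with hldef
  have hdpos : 0 < d := hd
  have hmod : t % d < d := Nat.mod_lt t hdpos
  have hteq : t = ℓ'*d + (c-1) := by
    rw [hcdef, hldef, Nat.add_sub_cancel]
    exact (Nat.div_add_mod' t d).symm
  have hc1 : 1 ≤ c := by omega
  have hcd : c ≤ d := by omega
  have hL : ℓ' < L := by
    rw [hldef, Nat.div_lt_iff_lt_mul hdpos, mul_comm]
    exact ht
  have hElt : maskSum t (fun p => p % d = c - 1) < 2^t := maskSum_lt _ _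
  have h2t : (2:ℕ)^(t+1) = 2^t + 2^t := by rw [pow_succ]; omega
  have h2tpos : 1 ≤ (2:ℕ)^t := Nat.one_le_two_pow
  constructor
  · omega
  · refine ⟨c, hc1, hcd, ?_, ?_⟩
    · rw [coord_add (r := c) hm (show (2:ℕ)^t < 2^(t+1) by omega),
        coord_add (r := c) hm (show maskSum t (fun p => p % d = c - 1) < 2^(t+1) by omega)]
      rw [hteq, coord_pow hd hc1 hcd hc1 hcd hL, coord_E hd hc1 hcd hc1 hcd hL]
      rw [if_pos rfl, if_pos rfl]
      have : 1 ≤ (2:ℕ)^ℓ' := Nat.one_le_two_pow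
      omega
    · intro s hs1 hsd hsc
      rw [coord_add (r := s) hm (show (2:ℕ)^t < 2^(t+1) by omega),
        coord_add (r := s) hm (show maskSum t (fun p => p % d = c - 1) < 2^(t+1) by omega)]
      rw [hteq, coord_pow hd hs1 hsd hc1 hcd hL, coord_E hd hs1 hsd hc1 hcd hL]
      rw [if_neg hsc, if_neg hsc]

lemma FN2 {d L t m : ℕ} (hd : 1 ≤ d) (ht : t < d*L) (hm : 2^(t+1) ∣ m) :
    MortonFaceNbr d L (m + (2^t + maskSum t (fun p => ¬(p % d = (t % d + 1) - 1))))
      (m + (2^t - 1)) := by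
  set c := t % d + 1 with hcdef
  set ℓ' := t / d with hldef
  have hdpos : 0 < d := hd
  have hmod : t % d < d := Nat.mod_lt t hdpos
  have hteq : t = ℓ'*d + (c-1) := by
    rw [hcdef, hldef, Nat.add_sub_cancel]
    exact (Nat.div_add_mod' t d).symm
  have hc1 : 1 ≤ c := by omega
  have hcd : c ≤ d := by omega
  have hL : ℓ' < L := by
    rw [hldef, Nat.div_lt_iff_lt_mul hdpos, mul_comm]
    exact ht
  have hFlt : maskSum t (fun p => ¬(p % d = c - 1)) < 2^t := maskSum_lt _ _
  have h2t : (2:ℕ)^(t+1) = 2^t + 2^t := by rw [pow_succ]; omega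
  have h2tpos : 1 ≤ (2:ℕ)^t := Nat.one_le_two_pow
  have key : ∀ s, 1 ≤ s → s ≤ d →
      mortonCoord d L s (m + (2^t + maskSum t (fun p => ¬(p % d = c - 1))))
        = mortonCoord d L s m + ((if s = c then 2^ℓ' else 0) +
            (if s = c then 0 else if s < c then 2^(ℓ'+1) - 1 else 2^ℓ' - 1)) ∧
      mortonCoord d L s (m + (2^t - 1))
        = mortonCoord d L s m + (if s < c then 2^(ℓ'+1) - 1 else 2^ℓ' - 1) := by
    intro s hs1 hsd
    constructor
    · rw [coord_add (r := s) hm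
        (show (2:ℕ)^t + maskSum t (fun p => ¬(p % d = c - 1)) < 2^(t+1) by omega)]
      rw [coord_add (r := s) (dvd_refl ((2:ℕ)^t)) hFlt]
      rw [hteq, coord_pow hd hs1 hsd hc1 hcd hL, coord_F hd hs1 hsd hc1 hcd hL]
    · rw [coord_add (r := s) hm (show (2:ℕ)^t - 1 < 2^(t+1) by omega)]
      rw [hteq, coord_ones hd hs1 hsd hc1 hcd hL]
  constructor
  · omega
  · refine ⟨c, hc1, hcd, ?_, ?_⟩
    · obtain ⟨h1, h2⟩ := key c hc1 hcd
      rw [h1, h2, if_pos rfl, if_pos rfl, if_neg (lt_irrefl c)]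
      have : 1 ≤ (2:ℕ)^ℓ' := Nat.one_le_two_pow
      omega
    · intro s hs1 hsd hsc
      obtain ⟨h1, h2⟩ := key s hs1 hsd
      rw [h1, h2, if_neg hsc, if_neg hsc, Nat.zero_add]

lemma faceNbr_symm {d L a b : ℕ} (h : MortonFaceNbr d L a b) : MortonFaceNbr d L b a := by
  obtain ⟨hne, r, h1, h2, h3, h4⟩ := h
  exact ⟨hne.symm, r, h1, h2, by omega, fun s hs1 hs2 hs3 => (h4 s hs1 hs2 hs3).symm⟩

lemma irel_symm {d L : ℕ} (A : Set ℕ) :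
    Symmetric (fun a b => a ∈ A ∧ b ∈ A ∧ MortonFaceNbr d L a b) :=
  fun _ _ ⟨h1, h2, h3⟩ => ⟨h2, h1, faceNbr_symm h3⟩

lemma conn_of_hub {d L : ℕ} {A : Set ℕ} {h : ℕ} (hh : h ∈ A)
    (H : ∀ a ∈ A, Relation.ReflTransGen
      (fun a b => a ∈ A ∧ b ∈ A ∧ MortonFaceNbr d L a b) a h) :
    MortonFaceConnected d L A := fun a ha b hb =>
  (H a ha).trans (by
    haveI : Std.Symm (fun a b => a ∈ A ∧ b ∈ A ∧ MortonFaceNbr d L a b) :=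
      ⟨fun x y hxy => irel_symm A hxy⟩
    exact Std.Symm.symm _ _ (H b hb))

lemma rtg_mono {d L : ℕ} {A B : Set ℕ} (hBA : B ⊆ A) {a b : ℕ}
    (h : Relation.ReflTransGen (fun a b => a ∈ B ∧ b ∈ B ∧ MortonFaceNbr d L a b) a b) :
    Relation.ReflTransGen (fun a b => a ∈ A ∧ b ∈ A ∧ MortonFaceNbr d L a b) a b :=
  Relation.ReflTransGen.mono (fun _ _ ⟨h1, h2, h3⟩ => ⟨hBA h1, hBA h2, h3⟩) _ _ h

lemma pre {d L : ℕ} (hd : 1 ≤ d) :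
    ∀ t, t ≤ d*L → ∀ m y, 2^t ∣ m → y < 2^t →
      MortonFaceConnected d L (Set.Icc m (m+y)) := by
  intro t
  induction t with
  | zero =>
    intro _ m y _ hy
    interval_cases y
    intro a ha b hb
    rw [Set.mem_Icc] at ha hb
    have : a = b := by omega
    subst this
    exact Relation.ReflTransGen.refl
  | succ t ih =>
    intro ht m y hm hy
    have h2t : (2:ℕ)^(t+1) = 2^t + 2^t := by rw [pow_succ]; omega
    have h2tpos : 1 ≤ (2:ℕ)^t := Nat.one_le_two_pow
    have hdvdt : (2:ℕ)^t ∣ m := dvd_trans (pow_dvd_pow 2 (Nat.le_succ t)) hm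
    by_cases hy' : y < 2^t
    · exact ih (by omega) m y hdvdt hy'
    · push_neg at hy'
      set E := maskSum t (fun p => p % d = (t % d + 1) - 1) with hEdef
      have hElt : E < 2^t := maskSum_lt _ _
      have hB0 := ih (by omega) m (2^t - 1) hdvdt (by omega)
      have hB1 := ih (by omega) (m + 2^t) (y - 2^t) (Dvd.dvd.add hdvdt dvd_rfl) (by omega)
      have hB0sub : Set.Icc m (m + (2^t - 1)) ⊆ Set.Icc m (m+y) := by
        intro x hx
        rw [Set.mem_Icc] at hx ⊢
        omega
      have hB1sub : Set.Icc (m + 2^t) ((m + 2^t) + (y - 2^t)) ⊆ Set.Icc m (m+y) := by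
        intro x hx
        rw [Set.mem_Icc] at hx ⊢
        omega
      have hnbr := FN1 (L := L) (m := m) hd (by omega) hm
      rw [← hEdef] at hnbr
      refine conn_of_hub (h := m) (Set.mem_Icc.mpr (by omega)) ?_
      intro a ha
      rw [Set.mem_Icc] at ha
      by_cases ha' : a ≤ m + (2^t - 1)
      · exact rtg_mono hB0sub (hB0 a (Set.mem_Icc.mpr (by omega)) m (Set.mem_Icc.mpr (by omega)))
      · have hstep1 : Relation.ReflTransGen
            (fun a b => a ∈ Set.Icc m (m+y) ∧ b ∈ Set.Icc m (m+y) ∧ MortonFaceNbr d L a b)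
            a (m + 2^t) :=
          rtg_mono hB1sub (hB1 a (Set.mem_Icc.mpr (by omega)) (m + 2^t)
            (Set.mem_Icc.mpr (by omega)))
        have hstep2 : Relation.ReflTransGen
            (fun a b => a ∈ Set.Icc m (m+y) ∧ b ∈ Set.Icc m (m+y) ∧ MortonFaceNbr d L a b)
            (m + 2^t) (m + E) :=
          Relation.ReflTransGen.single
            ⟨Set.mem_Icc.mpr (by omega), Set.mem_Icc.mpr (by omega), hnbr⟩
        have hstep3 : Relation.ReflTransGen
            (fun a b => a ∈ Set.Icc m (m+y) ∧ b ∈ Set.Icc m (m+y) ∧ MortonFaceNbr d L a b)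
            (m + E) m :=
          rtg_mono hB0sub (hB0 (m + E) (Set.mem_Icc.mpr (by omega)) m
            (Set.mem_Icc.mpr (by omega)))
        exact (hstep1.trans hstep2).trans hstep3

lemma suf {d L : ℕ} (hd : 1 ≤ d) :
    ∀ t, t ≤ d*L → ∀ m y, 2^t ∣ m → y < 2^t →
      MortonFaceConnected d L (Set.Icc (m+y) (m + (2^t - 1))) := by
  intro t
  induction t with
  | zero =>
    intro _ m y _ hy
    interval_cases y
    intro a ha b hb
    rw [Set.mem_Icc] at ha hb
    have : a = b := by omega
    subst this
    exact Relation.ReflTransGen.refl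
  | succ t ih =>
    intro ht m y hm hy
    have h2t : (2:ℕ)^(t+1) = 2^t + 2^t := by rw [pow_succ]; omega
    have h2tpos : 1 ≤ (2:ℕ)^t := Nat.one_le_two_pow
    have hdvdt : (2:ℕ)^t ∣ m := dvd_trans (pow_dvd_pow 2 (Nat.le_succ t)) hm
    by_cases hy' : 2^t ≤ y
    · have := ih (by omega) (m + 2^t) (y - 2^t) (Dvd.dvd.add hdvdt dvd_rfl) (by omega)
      have hseteq : Set.Icc ((m + 2^t) + (y - 2^t)) ((m + 2^t) + (2^t - 1))
          = Set.Icc (m+y) (m + (2^(t+1) - 1)) := by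
        ext x
        rw [Set.mem_Icc, Set.mem_Icc]
        omega
      rwa [hseteq] at this
    · push_neg at hy'
      set F := maskSum t (fun p => ¬(p % d = (t % d + 1) - 1)) with hFdef
      have hFlt : F < 2^t := maskSum_lt _ _
      have hB0 := ih (by omega) m y hdvdt hy'
      have hB1 := pre (L := L) hd t (by omega) (m + 2^t) (2^t - 1) (Dvd.dvd.add hdvdt dvd_rfl) (by omega)
      have hB0sub : Set.Icc (m+y) (m + (2^t - 1)) ⊆ Set.Icc (m+y) (m + (2^(t+1) - 1)) := by
        intro x hx
        rw [Set.mem_Icc] at hx ⊢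
        omega
      have hB1sub : Set.Icc (m + 2^t) ((m + 2^t) + (2^t - 1))
          ⊆ Set.Icc (m+y) (m + (2^(t+1) - 1)) := by
        intro x hx
        rw [Set.mem_Icc] at hx ⊢
        omega
      have hnbr := FN2 (L := L) (m := m) hd (by omega) hm
      rw [← hFdef] at hnbr
      refine conn_of_hub (h := m + 2^(t+1) - 1) (Set.mem_Icc.mpr (by omega)) ?_
      intro a ha
      rw [Set.mem_Icc] at ha
      have hhub : m + 2^(t+1) - 1 = (m + 2^t) + (2^t - 1) := by omega
      by_cases ha' : a ≤ m + (2^t - 1)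
      · have hstep1 : Relation.ReflTransGen
            (fun a b => a ∈ Set.Icc (m+y) (m + (2^(t+1) - 1)) ∧
              b ∈ Set.Icc (m+y) (m + (2^(t+1) - 1)) ∧ MortonFaceNbr d L a b)
            a (m + (2^t - 1)) :=
          rtg_mono hB0sub (hB0 a (Set.mem_Icc.mpr (by omega)) (m + (2^t - 1))
            (Set.mem_Icc.mpr (by omega)))
        have hstep2 : Relation.ReflTransGen
            (fun a b => a ∈ Set.Icc (m+y) (m + (2^(t+1) - 1)) ∧
              b ∈ Set.Icc (m+y) (m + (2^(t+1) - 1)) ∧ MortonFaceNbr d L a b)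
            (m + (2^t - 1)) (m + (2^t + F)) :=
          Relation.ReflTransGen.single
            ⟨Set.mem_Icc.mpr (by omega), Set.mem_Icc.mpr (by omega), faceNbr_symm hnbr⟩
        have hstep3 : Relation.ReflTransGen
            (fun a b => a ∈ Set.Icc (m+y) (m + (2^(t+1) - 1)) ∧
              b ∈ Set.Icc (m+y) (m + (2^(t+1) - 1)) ∧ MortonFaceNbr d L a b)
            (m + (2^t + F)) (m + 2^(t+1) - 1) := by
          rw [hhub]
          exact rtg_mono hB1sub (hB1 (m + (2^t + F)) (Set.mem_Icc.mpr (by omega))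
            ((m + 2^t) + (2^t - 1)) (Set.mem_Icc.mpr (by omega)))
        exact (hstep1.trans hstep2).trans hstep3
      · rw [hhub]
        exact rtg_mono hB1sub (hB1 a (Set.mem_Icc.mpr (by omega))
          ((m + 2^t) + (2^t - 1)) (Set.mem_Icc.mpr (by omega)))

lemma singleton_conn {d L a : ℕ} : MortonFaceConnected d L (Set.Icc a a) := by
  intro x hx y hy
  rw [Set.mem_Icc] at hx hy
  have : x = y := by omega
  subst this
  exact Relation.ReflTransGen.refl

lemma interval_split {d L : ℕ} (hd : 1 ≤ d) (a b : ℕ) (hab : a ≤ b) (hb : b < 2^(d*L)) :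
    ∃ A0 A1 : Set ℕ, Set.Icc a b = A0 ∪ A1 ∧
      MortonFaceConnected d L A0 ∧ MortonFaceConnected d L A1 := by
  rcases Nat.eq_or_lt_of_le hab with rfl | hab'
  · exact ⟨Set.Icc a a, ∅, by simp, singleton_conn, fun x hx => absurd hx (Set.notMem_empty x)⟩
  rcases Nat.eq_zero_or_pos a with rfl | ha
  · refine ⟨Set.Icc 0 b, ∅, by simp, ?_, fun x hx => absurd hx (Set.notMem_empty x)⟩
    have := pre (L := L) hd (d*L) le_rfl 0 b (dvd_zero _) hb
    simpa using this
  · classical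
    set P : ℕ → Prop := fun s => ∃ m, 2^s ∣ m ∧ a < m ∧ m ≤ b with hPdef
    have hP0 : P 0 := ⟨b, one_dvd _, hab', le_rfl⟩
    obtain ⟨t, htdef⟩ : ∃ t, t = Nat.findGreatest P (d*L) := ⟨_, rfl⟩
    have htspec : P t := htdef ▸ Nat.findGreatest_spec (Nat.zero_le _) hP0
    obtain ⟨m, hmdvd, ham, hmb⟩ := htspec
    have htle : t ≤ d*L := htdef ▸ Nat.findGreatest_le _
    have h2dL : 1 ≤ (2:ℕ)^(d*L) := Nat.one_le_two_pow
    have h2t : 1 ≤ (2:ℕ)^t := Nat.one_le_two_pow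
    obtain ⟨k, hk⟩ := hmdvd
    have hk1 : 1 ≤ k := by
      by_contra hcon
      have h0 : k = 0 := by omega
      rw [h0, Nat.mul_zero] at hk
      omega
    have hm2t : 2^t ≤ m := by
      rw [hk]
      calc (2:ℕ)^t = 2^t * 1 := by omega
      _ ≤ 2^t * k := Nat.mul_le_mul_left _ hk1
    have htlt : t < d*L := by
      rcases Nat.lt_or_ge t (d*L) with h | h
      · exact h
      · exfalso
        have heq : t = d*L := by omega
        have h1 : (2:ℕ)^(d*L) ≤ m := heq ▸ hm2t
        omega
    have hmax : ¬ P (t+1) := by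
      apply Nat.findGreatest_is_greatest (n := d*L)
      · omega
      · omega
    have hA1dvd : (2:ℕ)^t ∣ m := ⟨k, hk⟩
    -- b < m + 2^t
    have hbm : b < m + 2^t := by
      by_contra hcon
      push_neg at hcon
      rcases Nat.even_or_odd k with ⟨k', hk'⟩ | ⟨k', hk'⟩
      · exact hmax ⟨m, ⟨k', by rw [hk, hk', pow_succ]; ring⟩, ham, hmb⟩
      · exact hmax ⟨m + 2^t, ⟨k'+1, by rw [hk, hk', pow_succ]; ring⟩, by omega, by omega⟩
    -- m ≤ a + 2^t
    have ham2 : m ≤ a + 2^t := by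
      by_contra hcon
      push_neg at hcon
      rcases Nat.even_or_odd k with ⟨k', hk'⟩ | ⟨k', hk'⟩
      · exact hmax ⟨m, ⟨k', by rw [hk, hk', pow_succ]; ring⟩, ham, hmb⟩
      · refine hmax ⟨m - 2^t, ⟨k', ?_⟩, by omega, by omega⟩
        have hm' : m = 2^(t+1) * k' + 2^t := by rw [hk, hk', pow_succ]; ring
        omega
    have hA0 : MortonFaceConnected d L (Set.Icc a (m-1)) := by
      have hdvd' : (2:ℕ)^t ∣ (m - 2^t) := Nat.dvd_sub hA1dvd dvd_rfl
      have := suf (L := L) hd t (by omega) (m - 2^t) (a - (m - 2^t)) hdvd' (by omega)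
      rw [show (m - 2^t) + (a - (m - 2^t)) = a by omega,
        show (m - 2^t) + (2^t - 1) = m - 1 by omega] at this
      exact this
    have hA1 : MortonFaceConnected d L (Set.Icc m b) := by
      have := pre (L := L) hd t (by omega) m (b - m) hA1dvd (by omega)
      rw [show m + (b - m) = b by omega] at this
      exact this
    refine ⟨Set.Icc a (m-1), Set.Icc m b, ?_, hA0, hA1⟩
    ext x
    rw [Set.mem_union, Set.mem_Icc, Set.mem_Icc, Set.mem_Icc]
    omega

end MortonAux

open MortonAux in
/-- A contiguous segment of the Morton curve through a uniform or adaptive tree of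
maximum refinement level `L` produces at most two distinct face-connected subdomains,
in any space dimension `d`. -/
theorem morton_adaptive_segment_at_most_two_components (d L : ℕ) (hd : 1 ≤ d)
    (T : Finset (ℕ × ℕ)) (hT : MortonAdaptiveTree d L T)
    (S : Set (ℕ × ℕ)) (hST : ∀ p ∈ S, p ∈ T)
    (hseg : ∀ x y z : ℕ, (∃ p ∈ S, mortonDescends d L p x) →
      (∃ p ∈ S, mortonDescends d L p z) → x ≤ y → y ≤ z →
      ∃ p ∈ S, mortonDescends d L p y) :
    ∃ f : Fin 2 → Set (ℕ × ℕ), S = ⋃ i, f i ∧ ∀ i, MortonTreeConnected d L (f i) := by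
  classical
  rcases Set.eq_empty_or_nonempty S with rfl | ⟨p0, hp0⟩
  · exact ⟨fun _ => ∅, by simp, fun i p hp => absurd hp (Set.notMem_empty p)⟩
  obtain ⟨hTmem, hTuniq⟩ := hT
  have hpow : ∀ p ∈ T, (p.2 + 1) * 2^(d*(L - p.1)) ≤ 2^(d*L) := by
    intro p hp
    obtain ⟨h1, h2⟩ := hTmem p hp
    calc (p.2 + 1) * 2^(d*(L - p.1)) ≤ 2^(d*p.1) * 2^(d*(L-p.1)) :=
          Nat.mul_le_mul_right _ (by omega)
      _ = 2^(d*p.1 + d*(L-p.1)) := (pow_add 2 _ _).symm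
      _ = 2^(d*L) := by rw [← Nat.mul_add, Nat.add_sub_cancel' h1]
  set X : Set ℕ := {x : ℕ | ∃ p ∈ S, mortonDescends d L p x} with hXdef
  have hXbound : ∀ x ∈ X, x < 2^(d*L) := by
    rintro x ⟨p, hpS, hdesc⟩
    exact lt_of_lt_of_le hdesc.2 (hpow p (hST p hpS))
  have hdesc0 : ∀ p ∈ S, mortonDescends d L p (p.2 * 2^(d*(L - p.1))) := by
    intro p hp
    refine ⟨le_rfl, ?_⟩
    have hpos : 0 < 2^(d*(L - p.1)) := Nat.two_pow_pos _
    exact (Nat.mul_lt_mul_right hpos).mpr (Nat.lt_succ_self _)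
  have hXmem0 : ∀ p ∈ S, p.2 * 2^(d*(L - p.1)) ∈ X := fun p hp => ⟨p, hp, hdesc0 p hp⟩
  have hXne : X.Nonempty := ⟨_, hXmem0 p0 hp0⟩
  have hXbdd : BddAbove X := ⟨2^(d*L), fun x hx => (hXbound x hx).le⟩
  obtain ⟨a, hadef⟩ : ∃ a, a = sInf X := ⟨_, rfl⟩
  obtain ⟨b, hbdef⟩ : ∃ b, b = sSup X := ⟨_, rfl⟩
  have haX : a ∈ X := hadef ▸ Nat.sInf_mem hXne
  have hbX : b ∈ X := hbdef ▸ Nat.sSup_mem hXne hXbdd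
  have hXI : X = Set.Icc a b := by
    ext x
    constructor
    · intro hx
      exact Set.mem_Icc.mpr ⟨hadef ▸ Nat.sInf_le hx, hbdef ▸ le_csSup hXbdd hx⟩
    · intro hx
      rw [Set.mem_Icc] at hx
      obtain ⟨pa, hpa, hda⟩ := haX
      obtain ⟨pb, hpb, hdb⟩ := hbX
      exact hseg a x b ⟨pa, hpa, hda⟩ ⟨pb, hpb, hdb⟩ hx.1 hx.2
  have hab : a ≤ b := hadef ▸ Nat.sInf_le hbX
  obtain ⟨A0, A1, hunion, hc0, hc1⟩ := interval_split hd a b hab (hXbound b hbX)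
  set A : Fin 2 → Set ℕ := fun i => if i = 0 then A0 else A1 with hAdef
  have hAconn : ∀ i, MortonFaceConnected d L (A i) := by
    intro i
    show MortonFaceConnected d L (if i = 0 then A0 else A1)
    by_cases hi : i = 0
    · rw [if_pos hi]; exact hc0
    · rw [if_neg hi]; exact hc1
  have hAX : ∀ i, A i ⊆ X := by
    intro i
    rw [hXI, hunion]
    show (if i = 0 then A0 else A1) ⊆ A0 ∪ A1
    by_cases hi : i = 0
    · rw [if_pos hi]; exact Set.subset_union_left
    · rw [if_neg hi]; exact Set.subset_union_right
  set f : Fin 2 → Set (ℕ × ℕ) :=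
    fun i => {p | p ∈ S ∧ ∃ x ∈ A i, mortonDescends d L p x} with hfdef
  refine ⟨f, ?_, ?_⟩
  · ext p
    simp only [Set.mem_iUnion]
    constructor
    · intro hp
      have hx0 : p.2 * 2^(d*(L - p.1)) ∈ A0 ∪ A1 := by
        rw [← hunion, ← hXI]
        exact hXmem0 p hp
      rcases hx0 with h | h
      · refine ⟨0, hp, p.2 * 2^(d*(L - p.1)), ?_, hdesc0 p hp⟩
        simpa [hAdef] using h
      · refine ⟨1, hp, p.2 * 2^(d*(L - p.1)), ?_, hdesc0 p hp⟩
        simpa [hAdef] using h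
    · rintro ⟨i, hpi⟩
      exact hpi.1
  · intro i
    have lift : ∀ x y : ℕ,
        Relation.ReflTransGen (fun u v => u ∈ A i ∧ v ∈ A i ∧ MortonFaceNbr d L u v) x y →
        ∀ p q : ℕ × ℕ, p ∈ S → q ∈ S → mortonDescends d L p x → mortonDescends d L q y →
        Relation.ReflTransGen (fun u v => u ∈ f i ∧ v ∈ f i ∧ MortonTreeNbr d L u v) p q := by
      intro x y hpath
      induction hpath with
      | refl =>
        intro p q hpS hqS hdx hdy
        have hxlt : x < 2^(d*L) := lt_of_lt_of_le hdy.2 (hpow q (hST q hqS))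
        obtain ⟨u, hu, huniq⟩ := hTuniq x hxlt
        have h1 : p = u := huniq p ⟨hST p hpS, hdx⟩
        have h2 : q = u := huniq q ⟨hST q hqS, hdy⟩
        rw [h1, h2]
      | @tail w z hxw hedge ih =>
        intro p q hpS hqS hdx hdz
        obtain ⟨hwA, hzA, hnbr⟩ := hedge
        obtain ⟨q', hq'S, hdw⟩ := hAX i hwA
        exact (ih p q' hpS hq'S hdx hdw).tail
          ⟨⟨hq'S, w, hwA, hdw⟩, ⟨hqS, z, hzA, hdz⟩, ⟨w, z, hdw, hdz, hnbr⟩⟩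
    intro p hp q hq
    obtain ⟨hpS, x, hxA, hdx⟩ := hp
    obtain ⟨hqS, y, hyA, hdy⟩ := hq
    exact lift x y (hAconn i x hxA y hyA) p q hpS hqS hdx hdy
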